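/- arXiv:2501.06079 — 2 statements merged into one kernel-verified Lean document; each statement's English description precedes it below -/
import Mathlib

section
/- Let R_K(Z) := {A ∈ 𝒫(Z) : A = eco(A + K)} and define A ⊞ B := eco(A + B) for A, B ∈ R_K(Z). Then ⊞ is commutative and associative on R_K(Z) — in particular A₁ ⊞ (A₂ ⊞ A₃) = (A₁ ⊞ A₂) ⊞ A₃ for all A₁, A₂, A₃ ∈ R_K(Z) — and A ⊞ K = A for every A ∈ R_K(Z), so (R_K(Z), ⊞) is a commutative monoid with neutral element K. -/
open scoped Classical Pointwise
noncomputable section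

variable {X : Type*} [AddCommGroup X] [Module ℝ X] [TopologicalSpace X]
  [IsTopologicalAddGroup X] [ContinuousSMul ℝ X]
variable {Z : Type*} [AddCommGroup Z] [Module ℝ Z] [TopologicalSpace Z]
  [IsTopologicalAddGroup Z] [ContinuousSMul ℝ Z]

/-- A set is evenly convex (e-convex) if it is the intersection of an arbitrary
(possibly empty) family of open half-spaces. -/
def IsEConvex {Y : Type*} [AddCommGroup Y] [Module ℝ Y] [TopologicalSpace Y]
    (C : Set Y) : Prop :=
  ∃ S : Set ((Y →L[ℝ] ℝ) × ℝ), C = ⋂ p ∈ S, {y | p.1 y < p.2}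

/-- The evenly convex hull of `C`: the smallest e-convex set containing `C`. -/
def eco {Y : Type*} [AddCommGroup Y] [Module ℝ Y] [TopologicalSpace Y]
    (C : Set Y) : Set Y :=
  ⋂₀ {D : Set Y | IsEConvex D ∧ C ⊆ D}

/-- The negative polar cone of `K`. -/
def negPolar (K : Set Z) : Set (Z →L[ℝ] ℝ) := {z' | ∀ z ∈ K, z' z ≤ 0}

/-- `S_{(x*,z*)}(x) = {z | ⟨x,x*⟩ + ⟨z,z*⟩ < 0}`. -/
def Sopen (x' : X →L[ℝ] ℝ) (z' : Z →L[ℝ] ℝ) (x : X) : Set Z := {z | x' x + z' z < 0}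

/-- `S̄_{(x*,z*)}(x) = {z | ⟨x,x*⟩ + ⟨z,z*⟩ ≤ 0}`. -/
def Sclosed (x' : X →L[ℝ] ℝ) (z' : Z →L[ℝ] ℝ) (x : X) : Set Z := {z | x' x + z' z ≤ 0}

/-- Effective domain of a set-valued function. -/
def svDom (f : X → Set Z) : Set X := {x | f x ≠ ∅}

/-- A set-valued function is proper if its domain is nonempty and no value is all of `Z`. -/
def SVProper (f : X → Set Z) : Prop := svDom f ≠ ∅ ∧ ∀ x, f x ≠ Set.univ

/-- The `K`-epigraph of a set-valued function. -/
def epiK (K : Set Z) (f : X → Set Z) : Set (X × Z) := {p | p.2 ∈ f p.1 + K}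

/-- `f` is `K`-e-convex if its `K`-epigraph is e-convex. -/
def IsKEConvex (K : Set Z) (f : X → Set Z) : Prop := IsEConvex (epiK K f)

/-- The `K`-e-convex hull of `f`. -/
def KEco (K : Set Z) (f : X → Set Z) : X → Set Z := fun x => {z | (x, z) ∈ eco (epiK K f)}

/-- `g` is a (set-valued) minorant of `f`: `g(x) ≤_K f(x)`, i.e. `f(x)+K ⊆ g(x)+K`. -/
def IsMinorant (K : Set Z) (f g : X → Set Z) : Prop := ∀ x, f x + K ⊆ g x + K

/-- A `C`-affine set-valued function. -/
def IsCAffine (K : Set Z) (C : Set X) (a : X → Set Z) : Prop :=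
  ∃ x' : X →L[ℝ] ℝ, ∃ z' ∈ negPolar K \ {0}, ∃ zt : Z,
    ∀ x, a x = if x ∈ C then Sopen x' z' x + {zt} else ∅

/-- `M_f = eco (dom f)`. -/
def Mf (f : X → Set Z) : Set X := eco (svDom f)

/-- The set of all `M_f`-affine minorants of `f`. -/
def Hf (K : Set Z) (f : X → Set Z) : Set (X → Set Z) :=
  {a | IsCAffine K (Mf f) a ∧ IsMinorant K f a}

/-- A 𝒞-affine set-valued function: `C`-affine for some e-convex `C`. -/
def IsCalAffine (K : Set Z) (a : X → Set Z) : Prop :=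
  ∃ C : Set X, IsEConvex C ∧ IsCAffine K C a

/-- The set of all 𝒞-affine minorants of `f`. -/
def Cf (K : Set Z) (f : X → Set Z) : Set (X → Set Z) :=
  {a | IsCalAffine K a ∧ IsMinorant K f a}

/-- An e-affine set-valued function. -/
def IsEAffine (K : Set Z) (a : X → Set Z) : Prop :=
  ∃ x' y' : X →L[ℝ] ℝ, ∃ z' ∈ negPolar K \ {0}, ∃ zt : Z, ∃ α : ℝ,
    ∀ x, a x = if y' x < α then Sopen x' z' x + {zt} else ∅

/-- The set of all e-affine minorants of `f`. -/
def Ef (K : Set Z) (f : X → Set Z) : Set (X → Set Z) :=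
  {a | IsEAffine K a ∧ IsMinorant K f a}

/-- The modified negation of a subset of `Z`: `-∅ = Z`, `-Z = ∅`,
and the pointwise negation otherwise. -/
def negSet (A : Set Z) : Set Z :=
  if A = ∅ then Set.univ else if A = Set.univ then ∅ else -A

/-- The c-conjugate of a set-valued function `f`, defined (by `∅`-extension) on
`X* × X* × Z* × ℝ`; its meaningful domain is `X* × X* × (K*∖{0}) × ℝ`. -/
def cConj (K : Set Z) (f : X → Set Z)
    (w : (X →L[ℝ] ℝ) × (X →L[ℝ] ℝ) × (Z →L[ℝ] ℝ) × ℝ) : Set Z :=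
  if w.2.2.1 ∈ negPolar K \ {0} ∧ svDom f ⊆ {x | w.2.1 x < w.2.2.2} then
    negSet (eco (⋃ x : X, (f x + Sclosed w.1 w.2.2.1 (-x))))
  else ∅

/-- The c'-conjugate of `g : X* × X* × Z* × ℝ → 𝒫(Z)`. -/
def cPrimeConj (g : (X →L[ℝ] ℝ) × (X →L[ℝ] ℝ) × (Z →L[ℝ] ℝ) × ℝ → Set Z)
    (x : X) : Set Z :=
  if ∀ w : (X →L[ℝ] ℝ) × (X →L[ℝ] ℝ) × (Z →L[ℝ] ℝ) × ℝ, g w ≠ ∅ → w.2.1 x < w.2.2.2 then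
    ⋂ w ∈ {w : (X →L[ℝ] ℝ) × (X →L[ℝ] ℝ) × (Z →L[ℝ] ℝ) × ℝ | g w ≠ ∅},
      (Sclosed w.1 w.2.2.1 x + negSet (g w))
  else ∅

/-- The support function of the `K`-epigraph of `f` relative to open half-spaces,
with values in `ℝ ∪ {±∞}`. -/
def sigmaF (K : Set Z) (f : X → Set Z)
    (w : (X →L[ℝ] ℝ) × (X →L[ℝ] ℝ) × (Z →L[ℝ] ℝ) × ℝ) : EReal :=
  if svDom f ⊆ {x | w.2.1 x < w.2.2.2} then
    ⨆ p ∈ epiK K f, ((w.1 p.1 + w.2.2.1 p.2 : ℝ) : EReal)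
  else ⊤

/-- `η_C(x*,z*)`: `0` if the supremum of `⟨x,x*⟩+⟨z,z*⟩` over `C` is not attained
(every value is strictly below the supremum), `1` otherwise. -/
def etaSet (C : Set (X × Z)) (x' : X →L[ℝ] ℝ) (z' : Z →L[ℝ] ℝ) : ℕ :=
  if ∀ p ∈ C, ((x' p.1 + z' p.2 : ℝ) : EReal) < ⨆ q ∈ C, ((x' q.1 + z' q.2 : ℝ) : EReal)
  then 0 else 1


section EcoLemmas

variable {Y : Type*} [AddCommGroup Y] [Module ℝ Y] [TopologicalSpace Y]

lemma subset_eco (C : Set Y) : C ⊆ eco C := fun _ hz =>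
  Set.mem_sInter.2 fun _ hD => hD.2 hz

lemma eco_minimal {C D : Set Y} (hD : IsEConvex D) (h : C ⊆ D) : eco C ⊆ D :=
  Set.sInter_subset_of_mem ⟨hD, h⟩

lemma eco_mono {C D : Set Y} (h : C ⊆ D) : eco C ⊆ eco D := fun z hz =>
  Set.mem_sInter.2 fun E hE => Set.mem_sInter.1 hz E ⟨hE.1, h.trans hE.2⟩

lemma isEConvex_eco (C : Set Y) : IsEConvex (eco C) := by
  classical
  set 𝒮 : Set (Set Y) := {D : Set Y | IsEConvex D ∧ C ⊆ D}
  choose S hS using fun (D : 𝒮) => D.2.1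
  refine ⟨⋃ D : 𝒮, S D, ?_⟩
  ext y
  simp only [eco, Set.mem_sInter, Set.mem_iInter, Set.mem_iUnion]
  constructor
  · rintro h p ⟨D, hpD⟩
    have := h D.1 D.2
    rw [hS D] at this
    exact Set.mem_iInter₂.1 this p hpD
  · intro h D hD
    have : y ∈ ⋂ p ∈ S ⟨D, hD⟩, {y : Y | p.1 y < p.2} :=
      Set.mem_iInter₂.2 fun p hp => h p ⟨⟨D, hD⟩, hp⟩
    rwa [← hS ⟨D, hD⟩] at this

lemma isEConvex_translate {D : Set Y} (hD : IsEConvex D) (a : Y) :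
    IsEConvex {z : Y | a + z ∈ D} := by
  obtain ⟨S, rfl⟩ := hD
  refine ⟨(fun p : (Y →L[ℝ] ℝ) × ℝ => (p.1, p.2 - p.1 a)) '' S, ?_⟩
  ext z
  simp only [Set.mem_setOf_eq, Set.mem_iInter, Set.mem_image, Prod.exists]
  constructor
  · rintro h p ⟨u, α, huα, rfl⟩
    have := h (u, α) huα
    simp only [Set.mem_setOf_eq, map_add] at this ⊢
    linarith
  · intro h p hp
    have := h (p.1, p.2 - p.1 a) ⟨p.1, p.2, hp, rfl⟩
    simp only [Set.mem_setOf_eq, map_add] at this ⊢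
    linarith

lemma eco_add_eco_right (A C : Set Y) : eco (A + eco C) = eco (A + C) := by
  apply Set.Subset.antisymm
  · refine eco_minimal (isEConvex_eco _) ?_
    rintro _ ⟨a, ha, z, hz, rfl⟩
    have h1 : C ⊆ {w : Y | a + w ∈ eco (A + C)} := fun c hc =>
      subset_eco _ (Set.add_mem_add ha hc)
    exact eco_minimal (isEConvex_translate (isEConvex_eco _) a) h1 hz
  · exact eco_mono (Set.add_subset_add_left (subset_eco C))

lemma eco_add_eco_left (A C : Set Y) : eco (eco A + C) = eco (A + C) := by
  rw [add_comm (eco A) C, eco_add_eco_right, add_comm]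

end EcoLemmas

theorem stmt2 [T2Space Z] [LocallyConvexSpace ℝ Z]
    (K : Set Z) (hKconv : Convex ℝ K) (hKcone : ∀ c : ℝ, 0 < c → c • K ⊆ K)
    (hK0 : ({0} : Set Z) ⊂ K) (hKtop : K ≠ Set.univ) :
    (∀ A B : Set Z, A = eco (A + K) → B = eco (B + K) → eco (A + B) = eco (B + A)) ∧
    (∀ A₁ A₂ A₃ : Set Z, A₁ = eco (A₁ + K) → A₂ = eco (A₂ + K) → A₃ = eco (A₃ + K) →
      eco (A₁ + eco (A₂ + A₃)) = eco (eco (A₁ + A₂) + A₃)) ∧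
    (∀ A : Set Z, A = eco (A + K) → eco (A + K) = A) := by
  refine ⟨fun A B _ _ => by rw [add_comm], fun A₁ A₂ A₃ _ _ _ => ?_, fun A hA => hA.symm⟩
  rw [eco_add_eco_right, eco_add_eco_left, add_assoc]

end
end

section
/- Let f : X → 𝒫(Z) be a set-valued function. For every x ∈ dom f^{cc'}, f^{cc'}(x) equals the intersection, over all (x*,y*,z*,α) ∈ dom σ_f, of the sets {z ∈ Z : ⟨x,x*⟩+⟨z,z*⟩ < σ_f(x*,y*,z*,α)} when η_{epi_K f}(x*,z*) = 0 and {z ∈ Z : ⟨x,x*⟩+⟨z,z*⟩ ≤ σ_f(x*,y*,z*,α)} when η_{epi_K f}(x*,z*) = 1. Consequently, f^{cc'}(x) is an e-convex set in Z for all x ∈ X, f^{cc'} is a K-e-convex set-valued function with f^{cc'}(x) = eco(f^{cc'}(x)+K) for all x, and f(x) ⊆ f^{cc'}(x) and f(x)+K ⊆ f^{cc'}(x) for all x ∈ X. -/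
open scoped Classical Pointwise
noncomputable section

variable {X : Type*} [AddCommGroup X] [Module ℝ X] [TopologicalSpace X]
  [IsTopologicalAddGroup X] [ContinuousSMul ℝ X]
variable {Z : Type*} [AddCommGroup Z] [Module ℝ Z] [TopologicalSpace Z]
  [IsTopologicalAddGroup Z] [ContinuousSMul ℝ Z]

section EConvexBasics
variable {Y : Type*} [AddCommGroup Y] [Module ℝ Y] [TopologicalSpace Y]

lemma isEConvex_iInter {ι : Sort*} {C : ι → Set Y} (h : ∀ i, IsEConvex (C i)) :
    IsEConvex (⋂ i, C i) := by
  choose S hS using h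
  refine ⟨⋃ i, S i, ?_⟩
  ext y
  simp only [Set.mem_iInter, Set.mem_iUnion, hS, Set.mem_setOf_eq]
  constructor
  · rintro h p ⟨i, hp⟩
    exact h i p hp
  · intro h i p hp
    exact h p ⟨i, hp⟩

lemma isEConvex_empty : IsEConvex (∅ : Set Y) := by
  refine ⟨{(0, 0)}, ?_⟩
  ext y
  simp

lemma isEConvex_univ : IsEConvex (Set.univ : Set Y) := ⟨∅, by simp⟩

lemma isEConvex_openHS (φ : Y →L[ℝ] ℝ) (c : ℝ) : IsEConvex {y | φ y < c} := by
  refine ⟨{(φ, c)}, by simp⟩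

lemma isEConvex_closedHS (φ : Y →L[ℝ] ℝ) (c : ℝ) : IsEConvex {y | φ y ≤ c} := by
  refine ⟨{p | p.1 = φ ∧ c < p.2}, ?_⟩
  ext y
  simp only [Set.mem_setOf_eq, Set.mem_iInter]
  constructor
  · rintro h ⟨p1, p2⟩ ⟨rfl, hc⟩
    exact lt_of_le_of_lt h hc
  · intro h
    by_contra hc
    push_neg at hc
    exact absurd (h (φ, φ y) ⟨rfl, hc⟩) (lt_irrefl _)

lemma eco_eq_self {C : Set Y} (h : IsEConvex C) : eco C = C :=
  le_antisymm (fun y hy => hy C ⟨h, le_refl _⟩) (subset_eco C)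

end EConvexBasics


section HalfSpaces

lemma exists_apply_eq_real (z' : Z →L[ℝ] ℝ) (hz' : z' ≠ 0) (r : ℝ) : ∃ v : Z, z' v = r := by
  have hex : ∃ v, z' v ≠ 0 := by
    by_contra h
    push_neg at h
    exact hz' (ContinuousLinearMap.ext fun v => by simp [h v])
  obtain ⟨v, hv⟩ := hex
  exact ⟨(r / z' v) • v, by simp [div_mul_cancel₀ r hv]⟩

lemma HS_add_lt (z' : Z →L[ℝ] ℝ) (hz' : z' ≠ 0) (a b : ℝ) :
    {v : Z | z' v ≤ a} + {z : Z | z' z < b} = {z : Z | z' z < a + b} := by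
  ext z
  simp only [Set.mem_add, Set.mem_setOf_eq]
  constructor
  · rintro ⟨u, hu, v, hv, rfl⟩
    rw [map_add]
    linarith
  · intro h
    obtain ⟨u, hu⟩ := exists_apply_eq_real z' hz' a
    refine ⟨u, le_of_eq hu, z - u, ?_, by abel⟩
    rw [map_sub, hu]
    linarith

lemma HS_add_le (z' : Z →L[ℝ] ℝ) (hz' : z' ≠ 0) (a b : ℝ) :
    {v : Z | z' v ≤ a} + {z : Z | z' z ≤ b} = {z : Z | z' z ≤ a + b} := by
  ext z
  simp only [Set.mem_add, Set.mem_setOf_eq]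
  constructor
  · rintro ⟨u, hu, v, hv, rfl⟩
    rw [map_add]
    linarith
  · intro h
    obtain ⟨u, hu⟩ := exists_apply_eq_real z' hz' a
    refine ⟨u, le_of_eq hu, z - u, ?_, by abel⟩
    rw [map_sub, hu]
    linarith

lemma openHS_ne_empty (z' : Z →L[ℝ] ℝ) (hz' : z' ≠ 0) (b : ℝ) :
    {z : Z | z' z < b} ≠ ∅ := by
  obtain ⟨u, hu⟩ := exists_apply_eq_real z' hz' (b - 1)
  intro h
  have : u ∈ {z : Z | z' z < b} := by
    simp only [Set.mem_setOf_eq, hu]; linarith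
  rw [h] at this
  exact this

lemma closedHS_ne_empty (z' : Z →L[ℝ] ℝ) (hz' : z' ≠ 0) (b : ℝ) :
    {z : Z | z' z ≤ b} ≠ ∅ := by
  obtain ⟨u, hu⟩ := exists_apply_eq_real z' hz' b
  intro h
  have : u ∈ {z : Z | z' z ≤ b} := by simp only [Set.mem_setOf_eq, hu, le_refl]
  rw [h] at this
  exact this

lemma openHS_ne_univ (z' : Z →L[ℝ] ℝ) (hz' : z' ≠ 0) (b : ℝ) :
    {z : Z | z' z < b} ≠ Set.univ := by
  obtain ⟨u, hu⟩ := exists_apply_eq_real z' hz' b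
  intro h
  have : u ∈ {z : Z | z' z < b} := h ▸ Set.mem_univ u
  simp only [Set.mem_setOf_eq, hu] at this
  exact lt_irrefl _ this

lemma closedHS_ne_univ (z' : Z →L[ℝ] ℝ) (hz' : z' ≠ 0) (b : ℝ) :
    {z : Z | z' z ≤ b} ≠ Set.univ := by
  obtain ⟨u, hu⟩ := exists_apply_eq_real z' hz' (b + 1)
  intro h
  have : u ∈ {z : Z | z' z ≤ b} := h ▸ Set.mem_univ u
  simp only [Set.mem_setOf_eq, hu] at this
  linarith

lemma neg_openHS (z' : Z →L[ℝ] ℝ) (b : ℝ) :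
    -{z : Z | z' z < b} = {z : Z | -b < z' z} := by
  ext z
  simp only [Set.mem_neg, Set.mem_setOf_eq, map_neg]
  constructor <;> intro h <;> linarith

lemma neg_closedHS (z' : Z →L[ℝ] ℝ) (b : ℝ) :
    -{z : Z | z' z ≤ b} = {z : Z | -b ≤ z' z} := by
  ext z
  simp only [Set.mem_neg, Set.mem_setOf_eq, map_neg]
  constructor <;> intro h <;> linarith

end HalfSpaces


lemma negSet_empty : negSet (∅ : Set Z) = Set.univ := if_pos rfl

lemma negSet_univ : negSet (Set.univ : Set Z) = ∅ := by
  rw [negSet, if_neg, if_pos rfl]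
  simp [Set.eq_empty_iff_forall_notMem]

lemma negSet_of_ne {A : Set Z} (h1 : A ≠ ∅) (h2 : A ≠ Set.univ) : negSet A = -A := by
  rw [negSet, if_neg h1, if_neg h2]

lemma neg_ne_empty {A : Set Z} (h1 : A ≠ ∅) : -A ≠ ∅ := by
  rw [← Set.nonempty_iff_ne_empty] at h1 ⊢
  exact Set.nonempty_neg.2 h1

lemma neg_ne_univ {A : Set Z} (h2 : A ≠ Set.univ) : -A ≠ Set.univ := by
  intro h
  apply h2
  have := congrArg (fun s : Set Z => -s) h
  simpa [neg_neg] using this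

lemma negSet_negSet {A : Set Z} (h1 : A ≠ ∅) (h2 : A ≠ Set.univ) :
    negSet (negSet A) = A := by
  rw [negSet_of_ne h1 h2, negSet_of_ne (neg_ne_empty h1) (neg_ne_univ h2), neg_neg]

section Core
variable (K : Set Z) (f : X → Set Z)

lemma epiK_nonempty (h0 : (0:Z) ∈ K) (hdom : svDom f ≠ ∅) : (epiK K f).Nonempty := by
  obtain ⟨x, hx⟩ := Set.nonempty_iff_ne_empty.2 hdom
  obtain ⟨u, hu⟩ := Set.nonempty_iff_ne_empty.2 hx
  exact ⟨(x, u), ⟨u, hu, 0, h0, by simp⟩⟩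

lemma mem_epiK_of_mem (h0 : (0:Z) ∈ K) {x : X} {u : Z} (hu : u ∈ f x) :
    (x, u) ∈ epiK K f := ⟨u, hu, 0, h0, by simp⟩

lemma union_eq (h0 : (0:Z) ∈ K) (x' : X →L[ℝ] ℝ) {z' : Z →L[ℝ] ℝ}
    (hz'K : z' ∈ negPolar K) :
    (⋃ x : X, (f x + Sclosed x' z' (-x))) =
      {z | ∃ p ∈ epiK K f, z' z ≤ x' p.1 + z' p.2} := by
  ext z
  simp only [Set.mem_iUnion, Set.mem_setOf_eq]
  constructor
  · rintro ⟨x, hz⟩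
    rw [Set.mem_add] at hz
    obtain ⟨u, hu, v, hv, rfl⟩ := hz
    refine ⟨(x, u), mem_epiK_of_mem K f h0 hu, ?_⟩
    have hv' : x' (-x) + z' v ≤ 0 := hv
    rw [map_neg] at hv'
    rw [map_add]
    simp only
    linarith
  · rintro ⟨⟨x, q⟩, hq, hle⟩
    obtain ⟨u, hu, k, hk, huk⟩ := hq
    have hk' : z' k ≤ 0 := hz'K k hk
    simp only at hle
    refine ⟨x, ?_⟩
    rw [Set.mem_add]
    refine ⟨u, hu, z - u, ?_, by abel⟩
    show x' (-x) + z' (z - u) ≤ 0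
    rw [map_neg, map_sub]
    have huk' : u + k = q := huk
    have hq' : z' q = z' u + z' k := by rw [← huk', map_add]
    linarith

lemma sup_ne_bot {x' : X →L[ℝ] ℝ} {z' : Z →L[ℝ] ℝ} (hE : (epiK K f).Nonempty) :
    (⨆ p ∈ epiK K f, ((x' p.1 + z' p.2 : ℝ) : EReal)) ≠ ⊥ := by
  obtain ⟨p, hp⟩ := hE
  have := le_iSup₂ (f := fun q (_ : q ∈ epiK K f) => ((x' q.1 + z' q.2 : ℝ) : EReal)) p hp
  intro h
  rw [h, le_bot_iff] at this
  exact EReal.coe_ne_bot _ this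

lemma union_univ (h0 : (0:Z) ∈ K) {x' : X →L[ℝ] ℝ} {z' : Z →L[ℝ] ℝ}
    (hz'K : z' ∈ negPolar K)
    (htop : (⨆ p ∈ epiK K f, ((x' p.1 + z' p.2 : ℝ) : EReal)) = ⊤) :
    (⋃ x : X, (f x + Sclosed x' z' (-x))) = Set.univ := by
  rw [union_eq K f h0 x' hz'K]
  ext z
  simp only [Set.mem_setOf_eq, Set.mem_univ, iff_true]
  have hlt : ((z' z : ℝ) : EReal) < ⨆ p ∈ epiK K f, ((x' p.1 + z' p.2 : ℝ) : EReal) := by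
    rw [htop]
    exact EReal.coe_lt_top _
  obtain ⟨p, hp, hplt⟩ : ∃ p ∈ epiK K f, ((z' z : ℝ) : EReal) < ((x' p.1 + z' p.2 : ℝ) : EReal) := by
    simpa [lt_iSup_iff] using hlt
  exact ⟨p, hp, le_of_lt (EReal.coe_lt_coe_iff.1 hplt)⟩

lemma union_halfspace (h0 : (0:Z) ∈ K) {x' : X →L[ℝ] ℝ} {z' : Z →L[ℝ] ℝ}
    (hz'K : z' ∈ negPolar K) (hE : (epiK K f).Nonempty)
    (htop : (⨆ p ∈ epiK K f, ((x' p.1 + z' p.2 : ℝ) : EReal)) ≠ ⊤) :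
    (⋃ x : X, (f x + Sclosed x' z' (-x))) =
      if etaSet (epiK K f) x' z' = 0
      then {z : Z | z' z < (⨆ p ∈ epiK K f, ((x' p.1 + z' p.2 : ℝ) : EReal)).toReal}
      else {z : Z | z' z ≤ (⨆ p ∈ epiK K f, ((x' p.1 + z' p.2 : ℝ) : EReal)).toReal} := by
  have hbot : (⨆ p ∈ epiK K f, ((x' p.1 + z' p.2 : ℝ) : EReal)) ≠ ⊥ := sup_ne_bot K f hE
  have hcoe : (((⨆ p ∈ epiK K f, ((x' p.1 + z' p.2 : ℝ) : EReal)).toReal : ℝ) : EReal) =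
      ⨆ p ∈ epiK K f, ((x' p.1 + z' p.2 : ℝ) : EReal) := EReal.coe_toReal htop hbot
  have hub : ∀ p ∈ epiK K f,
      x' p.1 + z' p.2 ≤ (⨆ p ∈ epiK K f, ((x' p.1 + z' p.2 : ℝ) : EReal)).toReal := by
    intro p hp
    have h1 := le_iSup₂ (f := fun q (_ : q ∈ epiK K f) => ((x' q.1 + z' q.2 : ℝ) : EReal)) p hp
    rw [← hcoe] at h1
    exact EReal.coe_le_coe_iff.1 h1
  rw [union_eq K f h0 x' hz'K]
  by_cases hatt : ∀ p ∈ epiK K f,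
      ((x' p.1 + z' p.2 : ℝ) : EReal) < ⨆ q ∈ epiK K f, ((x' q.1 + z' q.2 : ℝ) : EReal)
  · rw [if_pos (by rw [etaSet, if_pos hatt])]
    ext z
    simp only [Set.mem_setOf_eq]
    constructor
    · rintro ⟨p, hp, hle⟩
      have h1 := hatt p hp
      rw [← hcoe] at h1
      have hlt := EReal.coe_lt_coe_iff.1 h1
      linarith
    · intro hz
      have hlt : ((z' z : ℝ) : EReal) < ⨆ p ∈ epiK K f, ((x' p.1 + z' p.2 : ℝ) : EReal) := by
        rw [← hcoe]
        exact_mod_cast hz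
      obtain ⟨p, hp, hplt⟩ : ∃ p ∈ epiK K f,
          ((z' z : ℝ) : EReal) < ((x' p.1 + z' p.2 : ℝ) : EReal) := by
        simpa [lt_iSup_iff] using hlt
      exact ⟨p, hp, le_of_lt (EReal.coe_lt_coe_iff.1 hplt)⟩
  · rw [if_neg (by rw [etaSet, if_neg hatt]; exact one_ne_zero)]
    push_neg at hatt
    obtain ⟨p₀, hp₀, hge⟩ := hatt
    have hle := le_iSup₂ (f := fun q (_ : q ∈ epiK K f) => ((x' q.1 + z' q.2 : ℝ) : EReal)) p₀ hp₀
    have heq : ((x' p₀.1 + z' p₀.2 : ℝ) : EReal) =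
        ⨆ p ∈ epiK K f, ((x' p.1 + z' p.2 : ℝ) : EReal) := le_antisymm hle hge
    have heqs : x' p₀.1 + z' p₀.2 =
        (⨆ p ∈ epiK K f, ((x' p.1 + z' p.2 : ℝ) : EReal)).toReal := by
      rw [← hcoe] at heq
      exact_mod_cast heq
    ext z
    simp only [Set.mem_setOf_eq]
    constructor
    · rintro ⟨p, hp, hle'⟩
      exact le_trans hle' (hub p hp)
    · intro hz
      exact ⟨p₀, hp₀, by rw [heqs]; exact hz⟩

end Core


section Conj
variable (K : Set Z) (f : X → Set Z)

lemma sigmaF_eq {w : (X →L[ℝ] ℝ) × (X →L[ℝ] ℝ) × (Z →L[ℝ] ℝ) × ℝ}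
    (hH : svDom f ⊆ {x | w.2.1 x < w.2.2.2}) :
    sigmaF K f w = ⨆ p ∈ epiK K f, ((w.1 p.1 + w.2.2.1 p.2 : ℝ) : EReal) := if_pos hH

lemma sigmaF_cond {w : (X →L[ℝ] ℝ) × (X →L[ℝ] ℝ) × (Z →L[ℝ] ℝ) × ℝ}
    (h : sigmaF K f w ≠ ⊤) : svDom f ⊆ {x | w.2.1 x < w.2.2.2} := by
  by_contra hc
  exact h (if_neg hc)

lemma cConj_spec (h0 : (0:Z) ∈ K) (hdom : svDom f ≠ ∅)
    (w : (X →L[ℝ] ℝ) × (X →L[ℝ] ℝ) × (Z →L[ℝ] ℝ) × ℝ) (hw : cConj K f w ≠ ∅) :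
    w.2.2.1 ∈ negPolar K \ {0} ∧ svDom f ⊆ {x | w.2.1 x < w.2.2.2} ∧ sigmaF K f w < ⊤ ∧
    ∀ x : X, Sclosed w.1 w.2.2.1 x + negSet (cConj K f w) =
      (if etaSet (epiK K f) w.1 w.2.2.1 = 0
       then {z : Z | w.1 x + w.2.2.1 z < (sigmaF K f w).toReal}
       else {z : Z | w.1 x + w.2.2.1 z ≤ (sigmaF K f w).toReal}) := by
  have hE := epiK_nonempty K f h0 hdom
  by_cases hcond : w.2.2.1 ∈ negPolar K \ {0} ∧ svDom f ⊆ {x | w.2.1 x < w.2.2.2}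
  swap
  · exact absurd (by rw [cConj, if_neg hcond]) hw
  obtain ⟨hz'M, hH⟩ := hcond
  have hz'K : w.2.2.1 ∈ negPolar K := hz'M.1
  have hz' : w.2.2.1 ≠ 0 := fun h => hz'M.2 (by simp [h])
  have hσ := sigmaF_eq K f (w := w) hH
  have hcConj : cConj K f w = negSet (eco (⋃ x : X, (f x + Sclosed w.1 w.2.2.1 (-x)))) :=
    if_pos ⟨hz'M, hH⟩
  have htop : sigmaF K f w ≠ ⊤ := by
    intro h
    apply hw
    rw [hcConj, union_univ K f h0 hz'K (by rw [← hσ]; exact h),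
      eco_eq_self isEConvex_univ, negSet_univ]
  refine ⟨hz'M, hH, lt_top_iff_ne_top.2 htop, ?_⟩
  intro x
  have hU := union_halfspace K f h0 hz'K hE (by rw [← hσ]; exact htop)
  rw [hσ] at htop ⊢
  have hScl : Sclosed w.1 w.2.2.1 x = {v : Z | w.2.2.1 v ≤ -(w.1 x)} := by
    ext v
    show w.1 x + w.2.2.1 v ≤ 0 ↔ _
    simp only [Set.mem_setOf_eq]
    constructor <;> intro <;> linarith
  by_cases hη : etaSet (epiK K f) w.1 w.2.2.1 = 0
  · rw [if_pos hη] at hU ⊢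
    have h1 := openHS_ne_empty w.2.2.1 hz'
      (⨆ p ∈ epiK K f, ((w.1 p.1 + w.2.2.1 p.2 : ℝ) : EReal)).toReal
    have h2 := openHS_ne_univ w.2.2.1 hz'
      (⨆ p ∈ epiK K f, ((w.1 p.1 + w.2.2.1 p.2 : ℝ) : EReal)).toReal
    rw [hcConj, hU, eco_eq_self (isEConvex_openHS _ _), negSet_negSet h1 h2, hScl,
      HS_add_lt w.2.2.1 hz']
    ext z
    simp only [Set.mem_setOf_eq]
    constructor <;> intro <;> linarith
  · rw [if_neg hη] at hU ⊢
    have h1 := closedHS_ne_empty w.2.2.1 hz'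
      (⨆ p ∈ epiK K f, ((w.1 p.1 + w.2.2.1 p.2 : ℝ) : EReal)).toReal
    have h2 := closedHS_ne_univ w.2.2.1 hz'
      (⨆ p ∈ epiK K f, ((w.1 p.1 + w.2.2.1 p.2 : ℝ) : EReal)).toReal
    rw [hcConj, hU, eco_eq_self (isEConvex_closedHS _ _), negSet_negSet h1 h2, hScl,
      HS_add_le w.2.2.1 hz']
    ext z
    simp only [Set.mem_setOf_eq]
    constructor <;> intro <;> linarith

lemma cConj_ne_empty (h0 : (0:Z) ∈ K) (hdom : svDom f ≠ ∅)
    (w : (X →L[ℝ] ℝ) × (X →L[ℝ] ℝ) × (Z →L[ℝ] ℝ) × ℝ)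
    (h1 : w.2.2.1 ∈ negPolar K \ {0}) (h2 : sigmaF K f w < ⊤) :
    cConj K f w ≠ ∅ := by
  have hE := epiK_nonempty K f h0 hdom
  have htop : sigmaF K f w ≠ ⊤ := h2.ne
  have hH := sigmaF_cond K f htop
  have hσ := sigmaF_eq K f (w := w) hH
  have hz' : w.2.2.1 ≠ 0 := fun h => h1.2 (by simp [h])
  have hU := union_halfspace K f h0 h1.1 hE (by rw [← hσ]; exact htop)
  rw [cConj, if_pos ⟨h1, hH⟩]
  by_cases hη : etaSet (epiK K f) w.1 w.2.2.1 = 0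
  · rw [if_pos hη] at hU
    rw [hU, eco_eq_self (isEConvex_openHS _ _),
      negSet_of_ne (openHS_ne_empty _ hz' _) (openHS_ne_univ _ hz' _)]
    exact neg_ne_empty (openHS_ne_empty _ hz' _)
  · rw [if_neg hη] at hU
    rw [hU, eco_eq_self (isEConvex_closedHS _ _),
      negSet_of_ne (closedHS_ne_empty _ hz' _) (closedHS_ne_univ _ hz' _)]
    exact neg_ne_empty (closedHS_ne_empty _ hz' _)

lemma dom_cConj (h0 : (0:Z) ∈ K) (hdom : svDom f ≠ ∅) :
    {w : (X →L[ℝ] ℝ) × (X →L[ℝ] ℝ) × (Z →L[ℝ] ℝ) × ℝ | cConj K f w ≠ ∅} =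
    {w | w.2.2.1 ∈ negPolar K \ {0} ∧ sigmaF K f w < ⊤} := by
  ext w
  constructor
  · intro hw
    obtain ⟨a, _, b, _⟩ := cConj_spec K f h0 hdom w hw
    exact ⟨a, b⟩
  · rintro ⟨a, b⟩
    exact cConj_ne_empty K f h0 hdom w a b

end Conj


section MoreEConvex

lemma isEConvex_inter {Y : Type*} [AddCommGroup Y] [Module ℝ Y] [TopologicalSpace Y]
    {A B : Set Y} (hA : IsEConvex A) (hB : IsEConvex B) : IsEConvex (A ∩ B) := by
  obtain ⟨SA, hSA⟩ := hA
  obtain ⟨SB, hSB⟩ := hB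
  refine ⟨SA ∪ SB, ?_⟩
  ext y
  simp only [hSA, hSB, Set.mem_inter_iff, Set.mem_iInter, Set.mem_union, Set.mem_setOf_eq]
  constructor
  · rintro ⟨h1, h2⟩ p (hp | hp)
    · exact h1 p hp
    · exact h2 p hp
  · intro h
    exact ⟨fun p hp => h p (Or.inl hp), fun p hp => h p (Or.inr hp)⟩

lemma isEConvex_shift_lt (z' : Z →L[ℝ] ℝ) (a c : ℝ) :
    IsEConvex {z : Z | a + z' z < c} := by
  have h : {z : Z | a + z' z < c} = {z : Z | z' z < c - a} := by
    ext z
    simp only [Set.mem_setOf_eq]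
    constructor <;> intro <;> linarith
  rw [h]
  exact isEConvex_openHS _ _

lemma isEConvex_shift_le (z' : Z →L[ℝ] ℝ) (a c : ℝ) :
    IsEConvex {z : Z | a + z' z ≤ c} := by
  have h : {z : Z | a + z' z ≤ c} = {z : Z | z' z ≤ c - a} := by
    ext z
    simp only [Set.mem_setOf_eq]
    constructor <;> intro <;> linarith
  rw [h]
  exact isEConvex_closedHS _ _

lemma isEConvex_fst_lt (y' : X →L[ℝ] ℝ) (α : ℝ) :
    IsEConvex {p : X × Z | y' p.1 < α} := by
  have h : {p : X × Z | y' p.1 < α} =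
      {p : X × Z | (y'.comp (ContinuousLinearMap.fst ℝ X Z)) p < α} := by
    ext p; simp
  rw [h]
  exact isEConvex_openHS _ _

lemma isEConvex_pair_lt (x' : X →L[ℝ] ℝ) (z' : Z →L[ℝ] ℝ) (c : ℝ) :
    IsEConvex {p : X × Z | x' p.1 + z' p.2 < c} := by
  have h : {p : X × Z | x' p.1 + z' p.2 < c} =
      {p : X × Z | (x'.comp (ContinuousLinearMap.fst ℝ X Z)
        + z'.comp (ContinuousLinearMap.snd ℝ X Z)) p < c} := by
    ext p; simp
  rw [h]
  exact isEConvex_openHS _ _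

lemma isEConvex_pair_le (x' : X →L[ℝ] ℝ) (z' : Z →L[ℝ] ℝ) (c : ℝ) :
    IsEConvex {p : X × Z | x' p.1 + z' p.2 ≤ c} := by
  have h : {p : X × Z | x' p.1 + z' p.2 ≤ c} =
      {p : X × Z | (x'.comp (ContinuousLinearMap.fst ℝ X Z)
        + z'.comp (ContinuousLinearMap.snd ℝ X Z)) p ≤ c} := by
    ext p; simp
  rw [h]
  exact isEConvex_closedHS _ _

end MoreEConvex


section Main
variable (K : Set Z) (f : X → Set Z)

/-- Value formula in the nonempty-domain case. -/
lemma cPrimeConj_eq (h0 : (0:Z) ∈ K) (hdom : svDom f ≠ ∅) (x : X) :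
    cPrimeConj (cConj K f) x =
      if (∀ w : (X →L[ℝ] ℝ) × (X →L[ℝ] ℝ) × (Z →L[ℝ] ℝ) × ℝ,
          cConj K f w ≠ ∅ → w.2.1 x < w.2.2.2) then
        ⋂ w ∈ {w : (X →L[ℝ] ℝ) × (X →L[ℝ] ℝ) × (Z →L[ℝ] ℝ) × ℝ |
            w.2.2.1 ∈ negPolar K \ {0} ∧ sigmaF K f w < ⊤},
          (if etaSet (epiK K f) w.1 w.2.2.1 = 0
           then {z : Z | w.1 x + w.2.2.1 z < (sigmaF K f w).toReal}
           else {z : Z | w.1 x + w.2.2.1 z ≤ (sigmaF K f w).toReal})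
      else ∅ := by
  rw [cPrimeConj]
  split_ifs with hc
  · ext z
    simp only [Set.mem_iInter, Set.mem_setOf_eq]
    constructor
    · intro h w hw
      have hw' : cConj K f w ≠ ∅ := cConj_ne_empty K f h0 hdom w hw.1 hw.2
      have hz := h w hw'
      rwa [(cConj_spec K f h0 hdom w hw').2.2.2 x] at hz
    · intro h w hw
      obtain ⟨a, -, b, hterm⟩ := cConj_spec K f h0 hdom w hw
      rw [hterm x]
      exact h w ⟨a, b⟩
  · rfl

lemma cond_iff (h0 : (0:Z) ∈ K) (hdom : svDom f ≠ ∅) (x : X) :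
    (∀ w : (X →L[ℝ] ℝ) × (X →L[ℝ] ℝ) × (Z →L[ℝ] ℝ) × ℝ,
        cConj K f w ≠ ∅ → w.2.1 x < w.2.2.2) ↔
    (∀ w : (X →L[ℝ] ℝ) × (X →L[ℝ] ℝ) × (Z →L[ℝ] ℝ) × ℝ,
        (w.2.2.1 ∈ negPolar K \ {0} ∧ sigmaF K f w < ⊤) → w.2.1 x < w.2.2.2) := by
  constructor
  · intro h w hw
    exact h w (cConj_ne_empty K f h0 hdom w hw.1 hw.2)
  · intro h w hw
    obtain ⟨a, -, b, -⟩ := cConj_spec K f h0 hdom w hw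
    exact h w ⟨a, b⟩

lemma sigmaF_ne_bot (h0 : (0:Z) ∈ K) (hdom : svDom f ≠ ∅)
    {w : (X →L[ℝ] ℝ) × (X →L[ℝ] ℝ) × (Z →L[ℝ] ℝ) × ℝ} (htop : sigmaF K f w ≠ ⊤) :
    sigmaF K f w ≠ ⊥ := by
  rw [sigmaF_eq K f (sigmaF_cond K f htop)]
  exact sup_ne_bot K f (epiK_nonempty K f h0 hdom)

/-- Conversion of the real-valued description to the `EReal` one. -/
lemma real_to_ereal_sets (h0 : (0:Z) ∈ K) (hdom : svDom f ≠ ∅) (x : X)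
    {w : (X →L[ℝ] ℝ) × (X →L[ℝ] ℝ) × (Z →L[ℝ] ℝ) × ℝ} (hw : sigmaF K f w < ⊤) :
    (if etaSet (epiK K f) w.1 w.2.2.1 = 0
     then {z : Z | w.1 x + w.2.2.1 z < (sigmaF K f w).toReal}
     else {z : Z | w.1 x + w.2.2.1 z ≤ (sigmaF K f w).toReal}) =
    (if etaSet (epiK K f) w.1 w.2.2.1 = 0
     then {z : Z | ((w.1 x + w.2.2.1 z : ℝ) : EReal) < sigmaF K f w}
     else {z : Z | ((w.1 x + w.2.2.1 z : ℝ) : EReal) ≤ sigmaF K f w}) := by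
  have ht := hw.ne
  have hb := sigmaF_ne_bot K f h0 hdom ht
  have hcoe : (((sigmaF K f w).toReal : ℝ) : EReal) = sigmaF K f w := EReal.coe_toReal ht hb
  by_cases hη : etaSet (epiK K f) w.1 w.2.2.1 = 0
  · rw [if_pos hη, if_pos hη]
    ext z
    simp only [Set.mem_setOf_eq]
    constructor
    · intro h
      rw [← hcoe]
      exact_mod_cast h
    · intro h
      rw [← hcoe] at h
      exact_mod_cast h
  · rw [if_neg hη, if_neg hη]
    ext z
    simp only [Set.mem_setOf_eq]
    constructor
    · intro h
      rw [← hcoe]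
      exact_mod_cast h
    · intro h
      rw [← hcoe] at h
      exact_mod_cast h

lemma addK_eq (h0 : (0:Z) ∈ K) (hdom : svDom f ≠ ∅) (x : X) :
    cPrimeConj (cConj K f) x + K = cPrimeConj (cConj K f) x := by
  rw [cPrimeConj_eq K f h0 hdom x]
  split_ifs with hc
  · ext z
    constructor
    · intro hz
      rw [Set.mem_add] at hz
      obtain ⟨a, ha, k, hk, rfl⟩ := hz
      simp only [Set.mem_iInter, Set.mem_setOf_eq] at ha ⊢
      intro w hw
      have h1 := ha w hw
      have hk' : w.2.2.1 k ≤ 0 := hw.1.1 k hk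
      split_ifs at h1 ⊢ with hη
      · simp only [Set.mem_setOf_eq, map_add] at h1 ⊢
        linarith
      · simp only [Set.mem_setOf_eq, map_add] at h1 ⊢
        linarith
    · intro hz
      exact ⟨z, hz, 0, h0, add_zero z⟩
  · rw [Set.empty_add]

lemma memK_le (h0 : (0:Z) ∈ K) (hdom : svDom f ≠ ∅) :
    ∀ x : X, f x + K ⊆ cPrimeConj (cConj K f) x := by
  intro x z hz
  rw [Set.mem_add] at hz
  obtain ⟨u, hu, k, hk, rfl⟩ := hz
  have hxdom : x ∈ svDom f := Set.nonempty_iff_ne_empty.1 ⟨u, hu⟩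
  have hc : ∀ w : (X →L[ℝ] ℝ) × (X →L[ℝ] ℝ) × (Z →L[ℝ] ℝ) × ℝ,
      cConj K f w ≠ ∅ → w.2.1 x < w.2.2.2 := by
    intro w hw
    exact (cConj_spec K f h0 hdom w hw).2.1 hxdom
  rw [cPrimeConj_eq K f h0 hdom x, if_pos hc]
  simp only [Set.mem_iInter, Set.mem_setOf_eq]
  intro w hw
  have hp : (x, u + k) ∈ epiK K f := ⟨u, hu, k, hk, rfl⟩
  have ht := hw.2.ne
  have hb := sigmaF_ne_bot K f h0 hdom ht
  have hσ := sigmaF_eq K f (w := w) (sigmaF_cond K f ht)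
  have hcoe : (((sigmaF K f w).toReal : ℝ) : EReal) = sigmaF K f w := EReal.coe_toReal ht hb
  split_ifs with hη
  · have hcnd : ∀ p ∈ epiK K f,
        ((w.1 p.1 + w.2.2.1 p.2 : ℝ) : EReal) < ⨆ q ∈ epiK K f,
          ((w.1 q.1 + w.2.2.1 q.2 : ℝ) : EReal) := by
      by_contra hcn
      rw [etaSet, if_neg hcn] at hη
      exact one_ne_zero hη
    have h1 := hcnd (x, u + k) hp
    rw [← hσ, ← hcoe] at h1
    exact EReal.coe_lt_coe_iff.1 h1
  · have h1 := le_iSup₂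
      (f := fun q (_ : q ∈ epiK K f) => ((w.1 q.1 + w.2.2.1 q.2 : ℝ) : EReal)) (x, u + k) hp
    rw [← hσ, ← hcoe] at h1
    exact EReal.coe_le_coe_iff.1 h1

end Main


section Main2
variable (K : Set Z) (f : X → Set Z)

lemma value_econvex (h0 : (0:Z) ∈ K) (hdom : svDom f ≠ ∅) (x : X) :
    IsEConvex (cPrimeConj (cConj K f) x) := by
  rw [cPrimeConj_eq K f h0 hdom x]
  split_ifs with hc
  · rw [Set.biInter_eq_iInter]
    apply isEConvex_iInter
    rintro ⟨w, hw⟩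
    split_ifs with hη
    · exact isEConvex_shift_lt _ _ _
    · exact isEConvex_shift_le _ _ _
  · exact isEConvex_empty

lemma epi_eq (h0 : (0:Z) ∈ K) (hdom : svDom f ≠ ∅) :
    epiK K (cPrimeConj (cConj K f)) =
      ⋂ w ∈ {w : (X →L[ℝ] ℝ) × (X →L[ℝ] ℝ) × (Z →L[ℝ] ℝ) × ℝ |
          w.2.2.1 ∈ negPolar K \ {0} ∧ sigmaF K f w < ⊤},
        ({p : X × Z | w.2.1 p.1 < w.2.2.2} ∩
         (if etaSet (epiK K f) w.1 w.2.2.1 = 0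
          then {p : X × Z | w.1 p.1 + w.2.2.1 p.2 < (sigmaF K f w).toReal}
          else {p : X × Z | w.1 p.1 + w.2.2.1 p.2 ≤ (sigmaF K f w).toReal})) := by
  ext p
  have hmem : p ∈ epiK K (cPrimeConj (cConj K f)) ↔ p.2 ∈ cPrimeConj (cConj K f) p.1 := by
    show p.2 ∈ cPrimeConj (cConj K f) p.1 + K ↔ _
    rw [addK_eq K f h0 hdom]
  rw [hmem, cPrimeConj_eq K f h0 hdom p.1]
  split_ifs with hc
  · simp only [Set.mem_iInter, Set.mem_setOf_eq, Set.mem_inter_iff]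
    constructor
    · intro h w hw
      refine ⟨(cond_iff K f h0 hdom p.1).1 hc w hw, ?_⟩
      have h1 := h w hw
      split_ifs at h1 ⊢ with hη
      · exact h1
      · exact h1
    · intro h w hw
      have h1 := (h w hw).2
      split_ifs at h1 ⊢ with hη
      · exact h1
      · exact h1
  · simp only [Set.mem_empty_iff_false, false_iff]
    intro h
    rw [cond_iff K f h0 hdom p.1] at hc
    push_neg at hc
    obtain ⟨w₀, hw₀, hge⟩ := hc
    simp only [Set.mem_iInter, Set.mem_setOf_eq, Set.mem_inter_iff] at h
    exact absurd (h w₀ hw₀).1 (not_lt.2 hge)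

lemma epi_econvex (h0 : (0:Z) ∈ K) (hdom : svDom f ≠ ∅) :
    IsKEConvex K (cPrimeConj (cConj K f)) := by
  unfold IsKEConvex
  rw [epi_eq K f h0 hdom, Set.biInter_eq_iInter]
  apply isEConvex_iInter
  rintro ⟨w, hw⟩
  apply isEConvex_inter (isEConvex_fst_lt _ _)
  split_ifs with hη
  · exact isEConvex_pair_lt _ _ _
  · exact isEConvex_pair_le _ _ _

end Main2


theorem stmt14 [T2Space X] [LocallyConvexSpace ℝ X] [T2Space Z] [LocallyConvexSpace ℝ Z]
    (K : Set Z) (hKconv : Convex ℝ K) (hKcone : ∀ c : ℝ, 0 < c → c • K ⊆ K)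
    (hK0 : ({0} : Set Z) ⊂ K) (hKtop : K ≠ Set.univ)
    (f : X → Set Z) :
    (∀ x : X, cPrimeConj (cConj K f) x ≠ ∅ →
      cPrimeConj (cConj K f) x =
        ⋂ w ∈ {w : (X →L[ℝ] ℝ) × (X →L[ℝ] ℝ) × (Z →L[ℝ] ℝ) × ℝ |
            w.2.2.1 ∈ negPolar K \ {0} ∧ sigmaF K f w < ⊤},
          (if etaSet (epiK K f) w.1 w.2.2.1 = 0 then
              {z : Z | ((w.1 x + w.2.2.1 z : ℝ) : EReal) < sigmaF K f w}
            else
              {z : Z | ((w.1 x + w.2.2.1 z : ℝ) : EReal) ≤ sigmaF K f w})) ∧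
    (∀ x : X, IsEConvex (cPrimeConj (cConj K f) x)) ∧
    IsKEConvex K (cPrimeConj (cConj K f)) ∧
    (∀ x : X, cPrimeConj (cConj K f) x = eco (cPrimeConj (cConj K f) x + K)) ∧
    (∀ x : X, f x ⊆ cPrimeConj (cConj K f) x) ∧
    (∀ x : X, f x + K ⊆ cPrimeConj (cConj K f) x) := by
  have h0 : (0:Z) ∈ K := hK0.1 rfl
  by_cases hdom : svDom f = ∅
  · -- empty domain
    have hfx : ∀ x : X, f x = ∅ := by
      intro x
      by_contra h
      have hx : x ∈ svDom f := h
      rw [hdom] at hx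
      exact hx
    by_cases hpolar : negPolar K \ {0} = (∅ : Set (Z →L[ℝ] ℝ))
    · have hcc : ∀ w : (X →L[ℝ] ℝ) × (X →L[ℝ] ℝ) × (Z →L[ℝ] ℝ) × ℝ,
          cConj K f w = ∅ := by
        intro w
        rw [cConj, if_neg]
        rintro ⟨h1, -⟩
        rw [hpolar] at h1
        exact h1
      have hD : {w : (X →L[ℝ] ℝ) × (X →L[ℝ] ℝ) × (Z →L[ℝ] ℝ) × ℝ | cConj K f w ≠ ∅}
          = ∅ := by
        ext w
        simp [hcc w]
      have hg : ∀ x, cPrimeConj (cConj K f) x = Set.univ := by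
        intro x
        rw [cPrimeConj, if_pos]
        · rw [hD]
          simp
        · intro w hw
          exact absurd (hcc w) hw
      have hD' : {w : (X →L[ℝ] ℝ) × (X →L[ℝ] ℝ) × (Z →L[ℝ] ℝ) × ℝ |
          w.2.2.1 ∈ negPolar K \ {0} ∧ sigmaF K f w < ⊤} = ∅ := by
        ext w
        simp only [Set.mem_setOf_eq, Set.mem_empty_iff_false, iff_false]
        rintro ⟨h1, -⟩
        rw [hpolar] at h1
        exact h1
      have huK : (Set.univ : Set Z) + K = Set.univ := by
        ext z
        simp only [Set.mem_univ, iff_true]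
        exact ⟨z, trivial, 0, h0, add_zero z⟩
      refine ⟨?_, ?_, ?_, ?_, ?_, ?_⟩
      · intro x _
        rw [hg x, hD']
        simp
      · intro x
        rw [hg x]
        exact isEConvex_univ
      · unfold IsKEConvex
        have hE : epiK K (cPrimeConj (cConj K f)) = Set.univ := by
          ext p
          simp only [Set.mem_univ, iff_true]
          show p.2 ∈ cPrimeConj (cConj K f) p.1 + K
          rw [hg, huK]
          trivial
        rw [hE]
        exact isEConvex_univ
      · intro x
        rw [hg x, huK, eco_eq_self isEConvex_univ]
      · intro x
        rw [hfx x]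
        exact Set.empty_subset _
      · intro x
        rw [hfx x, Set.empty_add]
        exact Set.empty_subset _
    · obtain ⟨z'₀, hz'₀⟩ := Set.nonempty_iff_ne_empty.2 hpolar
      have hw₀ : cConj K f ((0 : X →L[ℝ] ℝ), (0 : X →L[ℝ] ℝ), z'₀, (0:ℝ)) ≠ ∅ := by
        rw [cConj, if_pos]
        · show negSet (eco (⋃ x : X, (f x + Sclosed _ z'₀ (-x)))) ≠ ∅
          have hU : (⋃ x : X, (f x + Sclosed (0 : X →L[ℝ] ℝ) z'₀ (-x))) = ∅ := by
            simp [hfx, Set.empty_add]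
          rw [hU, eco_eq_self isEConvex_empty, negSet_empty]
          intro h
          exact (Set.univ_eq_empty_iff.mp h).false (0 : Z)
        · exact ⟨hz'₀, by rw [hdom]; exact Set.empty_subset _⟩
      have hg : ∀ x, cPrimeConj (cConj K f) x = ∅ := by
        intro x
        rw [cPrimeConj, if_neg]
        intro hall
        have hlt := hall _ hw₀
        simp at hlt
      refine ⟨?_, ?_, ?_, ?_, ?_, ?_⟩
      · intro x hne
        exact absurd (hg x) hne
      · intro x
        rw [hg x]
        exact isEConvex_empty
      · unfold IsKEConvex
        have hE : epiK K (cPrimeConj (cConj K f)) = ∅ := by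
          ext p
          simp only [Set.mem_empty_iff_false, iff_false]
          show p.2 ∉ cPrimeConj (cConj K f) p.1 + K
          rw [hg, Set.empty_add]
          exact Set.notMem_empty _
        rw [hE]
        exact isEConvex_empty
      · intro x
        rw [hg x, Set.empty_add, eco_eq_self isEConvex_empty]
      · intro x
        rw [hfx x]
        exact Set.empty_subset _
      · intro x
        rw [hfx x, Set.empty_add]
        exact Set.empty_subset _
  · refine ⟨?_, value_econvex K f h0 hdom, epi_econvex K f h0 hdom, ?_, ?_,
      memK_le K f h0 hdom⟩
    · intro x hne
      rw [cPrimeConj_eq K f h0 hdom x] at hne ⊢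
      split_ifs at hne ⊢ with hc
      · ext z
        simp only [Set.mem_iInter, Set.mem_setOf_eq]
        constructor
        · intro h w hw
          have h1 := h w hw
          rwa [real_to_ereal_sets K f h0 hdom x hw.2] at h1
        · intro h w hw
          rw [real_to_ereal_sets K f h0 hdom x hw.2]
          exact h w hw
      · exact absurd rfl hne
    · intro x
      rw [addK_eq K f h0 hdom x, eco_eq_self (value_econvex K f h0 hdom x)]
    · intro x
      exact fun z hz => memK_le K f h0 hdom x ⟨z, hz, 0, h0, add_zero z⟩


end
end
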